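/- Let M be a real 2×2 matrix with M² = -Id. Then there exists an invertible real 2×2 matrix P such that P · J · P⁻¹ = M, where J = [[0, -1], [1, 0]], and moreover the Frobenius norms of P and P⁻¹ are equal and both at most the square root of the ℓ¹-norm of M (the sum of absolute values of the entries of M). -/

import Mathlib

/-- The Frobenius norm of a 2×2 real matrix. -/
noncomputable def frobNorm2 (P : Matrix (Fin 2) (Fin 2) ℝ) : ℝ :=
  Real.sqrt (∑ i, ∑ j, (P i j) ^ 2)

/-- The ℓ¹-norm of a 2×2 real matrix. -/
def l1Norm2 (P : Matrix (Fin 2) (Fin 2) ℝ) : ℝ :=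
  ∑ i, ∑ j, |P i j|

theorem stmt_5 (M : Matrix (Fin 2) (Fin 2) ℝ) (h : M * M = -1) :
    ∃ P : Matrix (Fin 2) (Fin 2) ℝ, IsUnit P ∧
      P * !![0, -1; 1, 0] * P⁻¹ = M ∧
      frobNorm2 P = frobNorm2 P⁻¹ ∧
      frobNorm2 P ≤ Real.sqrt (l1Norm2 M) := by
  set a := M 0 0 with ha
  set b := M 0 1 with hb
  set c := M 1 0 with hc
  set d := M 1 1 with hd
  have h00 : a * a + b * c = -1 := by
    have := congrFun (congrFun h 0) 0
    simpa [Matrix.mul_apply, Fin.sum_univ_two] using this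
  have h10 : c * a + d * c = 0 := by
    have := congrFun (congrFun h 1) 0
    simpa [Matrix.mul_apply, Fin.sum_univ_two] using this
  have hcne : c ≠ 0 := by
    intro hc0
    rw [hc0] at h00
    nlinarith
  have hda : d = -a := by
    have : c * (a + d) = 0 := by ring_nf; linarith [h10]
    rcases mul_eq_zero.mp this with h1 | h1
    · exact absurd h1 hcne
    · linarith
  have hbc : b * c = -1 - a * a := by linarith
  have hcabs : (0:ℝ) < |c| := abs_pos.mpr hcne
  set u : ℝ := Real.sqrt |c| with hu
  have hu2 : u ^ 2 = |c| := Real.sq_sqrt (abs_nonneg c)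
  have hune : u ≠ 0 := by positivity
  set P : Matrix (Fin 2) (Fin 2) ℝ := !![u⁻¹, u⁻¹ * a; 0, u⁻¹ * c] with hP
  set Q : Matrix (Fin 2) (Fin 2) ℝ := !![u, -u * a / c; 0, u / c] with hQ
  have hPQ : P * Q = 1 := by
    ext i j
    fin_cases i <;> fin_cases j <;>
      simp [hP, hQ, Matrix.mul_apply, Fin.sum_univ_two] <;> field_simp <;> ring
  have hinv : P⁻¹ = Q := Matrix.inv_eq_right_inv hPQ
  have hunit : IsUnit P := by
    have := Matrix.isUnit_det_of_right_inverse hPQ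
    exact (Matrix.isUnit_iff_isUnit_det P).mpr this
  refine ⟨P, hunit, ?_, ?_, ?_⟩
  · rw [hinv]
    ext i j
    fin_cases i <;> fin_cases j <;>
      simp [hP, hQ, Matrix.mul_apply, Fin.sum_univ_two, ← ha, ← hb, ← hc, ← hd, hda] <;>
      field_simp <;> (try ring) <;> linear_combination (-1) * hbc
  · rw [hinv]
    unfold frobNorm2
    congr 1
    simp [hP, hQ, Fin.sum_univ_two]
    have hu4 : u ^ 4 = c ^ 2 := by
      have : (u ^ 2) ^ 2 = |c| ^ 2 := by rw [hu2]
      simpa [← pow_mul, sq_abs] using this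
    field_simp
    linear_combination (-(1 + a ^ 2 + c ^ 2)) * hu4
  · unfold frobNorm2 l1Norm2
    apply Real.sqrt_le_sqrt
    simp [hP, Fin.sum_univ_two, ← ha, ← hb, ← hc, ← hd]
    have hbabs : |b| * |c| = 1 + a ^ 2 := by
      rw [← abs_mul, hbc]
      rw [abs_of_nonpos (by nlinarith)]
      ring
    have hu2' : u⁻¹ ^ 2 = |c|⁻¹ := by
      rw [← hu2]; exact inv_pow u 2
    have key : u⁻¹ ^ 2 * (1 + a ^ 2 + c ^ 2) ≤ |a| + |b| + |c| + |d| := by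
      rw [hu2', hda, abs_neg]
      rw [inv_mul_le_iff₀ hcabs]
      have h1 : c ^ 2 = |c| * |c| := by rw [← sq_abs]; ring
      nlinarith [abs_nonneg a, abs_nonneg b, abs_nonneg c, mul_nonneg (abs_nonneg a) (abs_nonneg c)]
    have e : (u ^ 2)⁻¹ + (u⁻¹ * a) ^ 2 + (u⁻¹ * c) ^ 2
        = u⁻¹ ^ 2 * (1 + a ^ 2 + c ^ 2) := by rw [← inv_pow]; ring
    linarith [key, e.le, e.ge]
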